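/- Let A be a real n×n matrix that is diagonalizable over ℝ, say A = P·Λ·P⁻¹ with P invertible and Λ = diag(λ₁,…,λₙ), and suppose there is λ* > 0 with λᵢ ≥ λ* for all i. Let H be symmetric positive definite, let S be symmetric, and let N be a real n×n matrix with H·A = S + N. If ‖P‖·‖P⁻¹‖·‖H⁻¹·N‖ < λ*, where ‖·‖ denotes the operator norm of matrices acting on Euclidean ℝⁿ, then S is positive definite. -/

import Mathlib

open Matrix

/-- A real square matrix is *normally elliptic* if every eigenvalue
(i.e. every element of the spectrum of the associated complex matrix)
has positive real part. -/
def NormallyElliptic {n : ℕ} (A : Matrix (Fin n) (Fin n) ℝ) : Prop :=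
  ∀ μ ∈ spectrum ℂ (A.map Complex.ofReal), 0 < μ.re

/-- A (possibly nonsymmetric) real matrix is positive definite if `zᵀ M z > 0`
for all nonzero `z ∈ ℝⁿ`. -/
def PosDefMat {n : ℕ} (M : Matrix (Fin n) (Fin n) ℝ) : Prop :=
  ∀ z : Fin n → ℝ, z ≠ 0 → 0 < z ⬝ᵥ M.mulVec z


/-- The operator norm of a matrix acting on Euclidean ℝⁿ. -/
noncomputable def matOpNorm {n : ℕ} (M : Matrix (Fin n) (Fin n) ℝ) : ℝ :=
  ‖Matrix.toEuclideanCLM (𝕜 := ℝ) M‖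

/-! ### Auxiliary material -/

/-- Euclidean norm of a plain vector. -/
noncomputable def eNorm {n : ℕ} (x : Fin n → ℝ) : ℝ :=
  ‖(WithLp.equiv 2 (Fin n → ℝ)).symm x‖

lemma eNorm_pos {n : ℕ} {x : Fin n → ℝ} (hx : x ≠ 0) : 0 < eNorm x := by
  rw [eNorm, norm_pos_iff]
  intro h
  apply hx
  have := congrArg (WithLp.equiv 2 (Fin n → ℝ)) h
  simpa using this

lemma eNorm_sq {n : ℕ} (x : Fin n → ℝ) : eNorm x ^ 2 = ∑ i, (x i) ^ 2 := by
  rw [eNorm, EuclideanSpace.norm_eq, Real.sq_sqrt (by positivity)]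
  simp [Real.norm_eq_abs, sq_abs]

lemma eNorm_mulVec_le {n : ℕ} (M : Matrix (Fin n) (Fin n) ℝ) (x : Fin n → ℝ) :
    eNorm (M *ᵥ x) ≤ matOpNorm M * eNorm x := by
  have h : (WithLp.equiv 2 (Fin n → ℝ)).symm (M *ᵥ x) =
      Matrix.toEuclideanCLM (𝕜 := ℝ) M ((WithLp.equiv 2 (Fin n → ℝ)).symm x) := by
    rfl
  rw [eNorm, h]
  exact (Matrix.toEuclideanCLM (𝕜 := ℝ) M).le_opNorm _

lemma matOpNorm_nonneg {n : ℕ} (M : Matrix (Fin n) (Fin n) ℝ) : 0 ≤ matOpNorm M :=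
  norm_nonneg _

/-- Conjugation preserves positive definiteness. -/
lemma posDef_conj {n : ℕ} {A B : Matrix (Fin n) (Fin n) ℝ} (hA : A.PosDef)
    (hB : IsUnit B.det) : (B * A * Bᵀ).PosDef := by
  refine Matrix.PosDef.of_dotProduct_mulVec_pos ?_ ?_
  · have := Matrix.isHermitian_mul_mul_conjTranspose B hA.1
    simpa [Matrix.conjTranspose_eq_transpose_of_trivial] using this
  · intro x hx
    have hxB : Bᵀ *ᵥ x ≠ 0 := by
      have hBT : IsUnit (Bᵀ : Matrix (Fin n) (Fin n) ℝ).det := by rwa [Matrix.det_transpose]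
      have hinj := Matrix.mulVec_injective_iff_isUnit.mpr
        ((Matrix.isUnit_iff_isUnit_det _).mpr hBT)
      intro h0
      exact hx (hinj (h0.trans (Matrix.mulVec_zero _).symm))
    have key : star x ⬝ᵥ (B * A * Bᵀ) *ᵥ x = star (Bᵀ *ᵥ x) ⬝ᵥ A *ᵥ (Bᵀ *ᵥ x) := by
      simp only [star_trivial]
      rw [← Matrix.mulVec_mulVec, ← Matrix.mulVec_mulVec, Matrix.dotProduct_mulVec,
        ← Matrix.mulVec_transpose]
    rw [key]
    exact hA.dotProduct_mulVec_pos hxB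

/-- A real symmetric matrix with positive eigenvalues is positive definite. -/
lemma posDef_of_eigenvalues_pos {n : ℕ} {T : Matrix (Fin n) (Fin n) ℝ}
    (hT : T.IsHermitian) (h : ∀ i, 0 < hT.eigenvalues i) : T.PosDef := by
  have hU : IsUnit ((hT.eigenvectorUnitary : Matrix (Fin n) (Fin n) ℝ)).det := by
    apply (Matrix.isUnit_iff_isUnit_det _).mp
    exact ⟨⟨(hT.eigenvectorUnitary : Matrix (Fin n) (Fin n) ℝ),
      star (hT.eigenvectorUnitary : Matrix (Fin n) (Fin n) ℝ),
      (Matrix.mem_unitaryGroup_iff).mp hT.eigenvectorUnitary.2,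
      (Matrix.mem_unitaryGroup_iff').mp hT.eigenvectorUnitary.2⟩, rfl⟩
  have hdiag : (Matrix.diagonal (RCLike.ofReal ∘ hT.eigenvalues) :
      Matrix (Fin n) (Fin n) ℝ).PosDef := by
    refine Matrix.posDef_diagonal_iff.mpr fun i => ?_
    simpa using h i
  have hconj := posDef_conj (B := (hT.eigenvectorUnitary : Matrix (Fin n) (Fin n) ℝ)) hdiag hU
  have hspec := hT.spectral_theorem
  rw [Unitary.conjStarAlgAut_apply, Matrix.star_eq_conjTranspose,
    Matrix.conjTranspose_eq_transpose_of_trivial] at hspec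
  rwa [← hspec] at hconj

set_option maxHeartbeats 1600000 in
/-- Bauer–Fike perturbation: if `A = P·Λ·P⁻¹` is diagonalizable with diagonal
entries `≥ λ* > 0`, `H` is symmetric positive definite, `S` symmetric, and
`H·A = S + N` with `‖P‖·‖P⁻¹‖·‖H⁻¹·N‖ < λ*`, then `S` is positive definite. -/
theorem posDef_of_bauerFike_perturbation {n : ℕ}
    (A P Λ H S N : Matrix (Fin n) (Fin n) ℝ) (lamStar : ℝ)
    (hP : IsUnit P.det) (hΛ : Λ.IsDiag) (hA : A = P * Λ * P⁻¹)
    (hlam : 0 < lamStar) (hΛlam : ∀ i, lamStar ≤ Λ i i)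
    (hHsymm : H.IsSymm) (hHpd : PosDefMat H) (hSsymm : S.IsSymm)
    (hHA : H * A = S + N)
    (hsmall : matOpNorm P * matOpNorm P⁻¹ * matOpNorm (H⁻¹ * N) < lamStar) :
    PosDefMat S := by
  by_contra hS
  rw [PosDefMat] at hS
  push_neg at hS
  obtain ⟨z, hz, hzS⟩ := hS
  -- H is PosDef in the Mathlib sense
  have hHpd' : H.PosDef := by
    refine Matrix.PosDef.of_dotProduct_mulVec_pos ?_ ?_
    · rw [Matrix.IsHermitian, Matrix.conjTranspose_eq_transpose_of_trivial]; exact hHsymm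
    · intro x hx; simpa [star_trivial] using hHpd x hx
  have hHdet : IsUnit H.det := hHpd'.det_pos.ne'.isUnit
  -- the square root of H
  open scoped MatrixOrder in set B := CFC.sqrt H with hBdef
  have hBB : B * B = H := by
    open scoped MatrixOrder in exact CFC.sqrt_mul_sqrt_self H hHpd'.posSemidef.nonneg
  have hBherm : B.IsHermitian := by
    open scoped MatrixOrder in exact (CFC.sqrt_nonneg H).posSemidef.1
  have hBsymm : Bᵀ = B := by
    rw [← Matrix.conjTranspose_eq_transpose_of_trivial]; exact hBherm
  have hBdet : IsUnit B.det := by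
    have hdd : B.det * B.det = H.det := by rw [← Matrix.det_mul, hBB]
    have hpos : 0 < H.det := hHpd'.det_pos
    refine isUnit_iff_ne_zero.mpr fun h0 => ?_
    rw [h0, mul_zero] at hdd
    exact hpos.ne' hdd.symm
  have hBinv : B * B⁻¹ = 1 := Matrix.mul_nonsing_inv _ hBdet
  have hBinv' : B⁻¹ * B = 1 := Matrix.nonsing_inv_mul _ hBdet
  set T := B⁻¹ * S * B⁻¹ with hTdef
  have hSherm : S.IsHermitian := by
    rw [Matrix.IsHermitian, Matrix.conjTranspose_eq_transpose_of_trivial]; exact hSsymm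
  have hTherm : T.IsHermitian := by
    rw [Matrix.IsHermitian, hTdef, Matrix.conjTranspose_mul, Matrix.conjTranspose_mul,
      hBherm.inv.eq, hSherm.eq, Matrix.mul_assoc]
  have hSBTB : B * T * B = S := by
    rw [hTdef]
    calc B * (B⁻¹ * S * B⁻¹) * B = B * B⁻¹ * S * (B⁻¹ * B) := by
          simp only [Matrix.mul_assoc]
      _ = S := by rw [hBinv, hBinv', Matrix.one_mul, Matrix.mul_one]
  -- T has a nonpositive eigenvalue
  have hex : ∃ i, hTherm.eigenvalues i ≤ 0 := by
    by_contra hall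
    push_neg at hall
    have hTpd := posDef_of_eigenvalues_pos hTherm hall
    have hSpd : S.PosDef := by
      have := posDef_conj hTpd hBdet
      rw [hBsymm, hSBTB] at this
      exact this
    have := hSpd.dotProduct_mulVec_pos hz
    rw [star_trivial] at this
    exact absurd this (not_lt.mpr hzS)
  obtain ⟨i, hμ⟩ := hex
  set μ := hTherm.eigenvalues i with hμdef
  set u : Fin n → ℝ := ⇑(hTherm.eigenvectorBasis i) with hudef
  have hu0 : u ≠ 0 := by
    intro h
    rw [hudef] at h
    exact hTherm.eigenvectorBasis.orthonormal.ne_zero i (by simpa using congrArg (WithLp.toLp 2) h)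
  have hTu : T *ᵥ u = μ • u := hTherm.mulVec_eigenvectorBasis i
  set v := B⁻¹ *ᵥ u with hvdef
  have hBv : B *ᵥ v = u := by
    rw [hvdef, Matrix.mulVec_mulVec, hBinv, Matrix.one_mulVec]
  have hv0 : v ≠ 0 := by
    intro h; apply hu0; rw [← hBv, h, Matrix.mulVec_zero]
  have hHv : H *ᵥ v = B *ᵥ u := by
    rw [← hBB, ← Matrix.mulVec_mulVec, hBv]
  have hSv : S *ᵥ v = μ • (H *ᵥ v) := by
    rw [← hSBTB, hHv, ← Matrix.mulVec_mulVec, ← Matrix.mulVec_mulVec, hBv, hTu,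
      Matrix.mulVec_smul]
  have hHinv' : H⁻¹ * H = 1 := Matrix.nonsing_inv_mul _ hHdet
  have hAv : A *ᵥ v = μ • v + (H⁻¹ * N) *ᵥ v := by
    have h1 : H⁻¹ *ᵥ (H *ᵥ (A *ᵥ v)) = A *ᵥ v := by
      rw [Matrix.mulVec_mulVec, hHinv', Matrix.one_mulVec]
    rw [← h1]
    have h2 : H *ᵥ (A *ᵥ v) = (S + N) *ᵥ v := by
      rw [Matrix.mulVec_mulVec, hHA]
    rw [h2, Matrix.add_mulVec, Matrix.mulVec_add, hSv, Matrix.mulVec_smul,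
      Matrix.mulVec_mulVec, hHinv', Matrix.one_mulVec, Matrix.mulVec_mulVec]
  set w := P⁻¹ *ᵥ v with hwdef
  have hPinv : P * P⁻¹ = 1 := Matrix.mul_nonsing_inv _ hP
  have hPinv' : P⁻¹ * P = 1 := Matrix.nonsing_inv_mul _ hP
  have hPw : P *ᵥ w = v := by
    rw [hwdef, Matrix.mulVec_mulVec, hPinv, Matrix.one_mulVec]
  have hw0 : w ≠ 0 := fun h => hv0 (by rw [← hPw, h, Matrix.mulVec_zero])
  have hD : Λ *ᵥ w - μ • w = P⁻¹ *ᵥ ((H⁻¹ * N) *ᵥ (P *ᵥ w)) := by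
    have hPP : P * Λ * P⁻¹ * P = P * Λ := by
      calc P * Λ * P⁻¹ * P = P * Λ * (P⁻¹ * P) := by simp only [Matrix.mul_assoc]
        _ = P * Λ := by rw [hPinv', Matrix.mul_one]
    have h3 : A *ᵥ v = P *ᵥ (Λ *ᵥ w) := by
      calc A *ᵥ v = (P * Λ * P⁻¹) *ᵥ (P *ᵥ w) := by rw [hA, hPw]
        _ = (P * Λ * P⁻¹ * P) *ᵥ w := by rw [Matrix.mulVec_mulVec]
        _ = (P * Λ) *ᵥ w := by rw [hPP]
        _ = P *ᵥ (Λ *ᵥ w) := (Matrix.mulVec_mulVec _ _ _).symm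
    have h4 : P *ᵥ (Λ *ᵥ w) = μ • v + (H⁻¹ * N) *ᵥ v := by rw [← h3, hAv]
    have h5 : Λ *ᵥ w = μ • w + P⁻¹ *ᵥ ((H⁻¹ * N) *ᵥ v) := by
      have h6 := congrArg (fun x => P⁻¹ *ᵥ x) h4
      simp only [Matrix.mulVec_add, Matrix.mulVec_smul, Matrix.mulVec_mulVec] at h6
      rw [← Matrix.mul_assoc, hPinv', Matrix.one_mul] at h6
      rw [← Matrix.mulVec_mulVec, ← hwdef] at h6
      exact h6
    rw [hPw, h5]
    abel
  set E := H⁻¹ * N with hEdef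
  set D := Λ *ᵥ w - μ • w with hDdef
  have hDi : ∀ j, D j = (Λ j j - μ) * w j := by
    intro j
    have hΛw : (Λ *ᵥ w) j = Λ j j * w j := by
      conv_lhs => rw [← hΛ.diagonal_diag]
      rw [Matrix.mulVec_diagonal]
      rfl
    simp only [hDdef, Pi.sub_apply, Pi.smul_apply, smul_eq_mul, hΛw]
    ring
  -- lower bound
  have hlow : lamStar * eNorm w ≤ eNorm D := by
    have hsq : (lamStar * eNorm w) ^ 2 ≤ eNorm D ^ 2 := by
      rw [mul_pow, eNorm_sq, eNorm_sq, Finset.mul_sum]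
      refine Finset.sum_le_sum fun j _ => ?_
      rw [hDi j, mul_pow]
      have h1 : lamStar ≤ Λ j j - μ := by
        have := hΛlam j; linarith
      have h2 : lamStar ^ 2 ≤ (Λ j j - μ) ^ 2 := by nlinarith
      exact mul_le_mul_of_nonneg_right h2 (sq_nonneg _)
    have h1 : 0 ≤ lamStar * eNorm w := mul_nonneg hlam.le (norm_nonneg _)
    have h2 : 0 ≤ eNorm D := norm_nonneg _
    nlinarith
  -- upper bound
  have hup : eNorm D ≤ matOpNorm P⁻¹ * (matOpNorm E * (matOpNorm P * eNorm w)) := by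
    rw [hD]
    refine (eNorm_mulVec_le _ _).trans ?_
    refine mul_le_mul_of_nonneg_left ?_ (matOpNorm_nonneg _)
    refine (eNorm_mulVec_le _ _).trans ?_
    exact mul_le_mul_of_nonneg_left (eNorm_mulVec_le _ _) (matOpNorm_nonneg _)
  have hwpos : 0 < eNorm w := eNorm_pos hw0
  have heq : matOpNorm P⁻¹ * (matOpNorm E * (matOpNorm P * eNorm w)) =
      (matOpNorm P * matOpNorm P⁻¹ * matOpNorm E) * eNorm w := by ring
  have hfin : lamStar * eNorm w < lamStar * eNorm w :=
    lt_of_le_of_lt (hlow.trans (hup.trans_eq heq))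
      (mul_lt_mul_of_pos_right hsmall hwpos)
  exact absurd hfin (lt_irrefl _)
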